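/- (∞-Wasserstein bound for the block approximation) Let γ ∈ Π(μ,ν) and let γ^δ be its block approximation at scale δ ∈ (0,1). Then there exists a coupling η ∈ Π(γ, γ^δ) (a Borel probability measure on (ℝ^d×ℝ^d)×(ℝ^d×ℝ^d) with marginals γ and γ^δ) such that the η-essential supremum of the Euclidean distance |z − w| between paired points z, w ∈ ℝ^d×ℝ^d is at most √(2d)·δ; in particular W_∞(γ, γ^δ) ≤ √(2d)·δ. -/

import Mathlib

open MeasureTheory ENNReal Filter
open scoped Classical

noncomputable section

/-- ℝ^d with its Euclidean structure. -/
abbrev Rd (d : ℕ) := EuclideanSpace ℝ (Fin d)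

/-- γ ∈ Π(μ,ν): γ has first marginal μ and second marginal ν. -/
def IsCoupling {E F : Type*} [MeasurableSpace E] [MeasurableSpace F]
    (γ : Measure (E × F)) (μ : Measure E) (ν : Measure F) : Prop :=
  γ.map Prod.fst = μ ∧ γ.map Prod.snd = ν

/-- Relative entropy H(γ|ρ) = ∫ log(dγ/dρ) dγ if γ ≪ ρ (and the integral exists), +∞ otherwise. -/
def relEntropy {E : Type*} [MeasurableSpace E] (γ ρ : Measure E) : ℝ≥0∞ :=
  if γ ≪ ρ ∧ Integrable (llr γ ρ) γ then ENNReal.ofReal (∫ z, llr γ ρ z ∂γ) else ∞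

/-- The entropic functional J_{p,ε}(γ) = (∫ c^p dγ + ε H(γ|μ⊗ν))^{1/p} on Π(μ,ν), +∞ outside. -/
def Jpe {d : ℕ} (c : Rd d × Rd d → ℝ) (μ ν : Measure (Rd d)) (p ε : ℝ)
    (γ : Measure (Rd d × Rd d)) : ℝ≥0∞ :=
  if IsCoupling γ μ ν then
    (∫⁻ z, ENNReal.ofReal (c z ^ p) ∂γ + ENNReal.ofReal ε * relEntropy γ (μ.prod ν)) ^ (1 / p)
  else ∞

/-- The supremal functional J_∞(γ) = γ-ess sup c on Π(μ,ν), +∞ outside. -/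
def Jinf {d : ℕ} (c : Rd d × Rd d → ℝ) (μ ν : Measure (Rd d))
    (γ : Measure (Rd d × Rd d)) : ℝ≥0∞ :=
  if IsCoupling γ μ ν then essSup (fun z => ENNReal.ofReal (c z)) γ else ∞

/-- Weak-star convergence of a family of (probability) measures, as the real parameter p → ∞. -/
def WeakStarTendsto {E : Type*} [MeasurableSpace E] [TopologicalSpace E]
    (γ : ℝ → Measure E) (γ₀ : Measure E) : Prop :=
  ∀ f : BoundedContinuousFunction E ℝ,
    Tendsto (fun p => ∫ z, f z ∂(γ p)) atTop (nhds (∫ z, f z ∂γ₀))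

/-- The support of a Borel measure: points all of whose neighborhoods have positive measure. -/
def msupport {E : Type*} [MeasurableSpace E] [TopologicalSpace E] (μ : Measure E) : Set E :=
  {x | ∀ U ∈ nhds x, μ U ≠ 0}

/-- The half-open cube Q_k^δ = δ(k + [0,1)^d). -/
def blockCube (d : ℕ) (δ : ℝ) (k : Fin d → ℤ) : Set (Rd d) :=
  {x | ∀ i, x i ∈ Set.Ico (δ * k i) (δ * (k i + 1))}

/-- The normalized restriction μ_Q = μ(Q ∩ ·)/μ(Q). -/
def normRestrict {E : Type*} [MeasurableSpace E] (μ : Measure E) (Q : Set E) : Measure E :=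
  (μ Q)⁻¹ • μ.restrict Q

/-- The block approximation γ^δ = ∑_{k,l} γ(Q_k^δ × Q_l^δ) μ_k^δ ⊗ ν_l^δ
    (terms with μ(Q_k^δ) = 0 or ν(Q_l^δ) = 0 vanish automatically). -/
def blockApprox {d : ℕ} (μ ν : Measure (Rd d)) (γ : Measure (Rd d × Rd d)) (δ : ℝ) :
    Measure (Rd d × Rd d) :=
  Measure.sum (fun kl : (Fin d → ℤ) × (Fin d → ℤ) =>
    γ (blockCube d δ kl.1 ×ˢ blockCube d δ kl.2) •
      ((normRestrict μ (blockCube d δ kl.1)).prod (normRestrict ν (blockCube d δ kl.2))))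

section AuxBlock
variable {d : ℕ}

instance normRestrict_sfinite {E : Type*} [MeasurableSpace E] (μ : Measure E) [SFinite μ]
    (Q : Set E) : SFinite (normRestrict μ Q) := by
  unfold normRestrict; infer_instance

lemma blockCube_measurableSet (δ : ℝ) (k : Fin d → ℤ) :
    MeasurableSet (blockCube d δ k) := by
  have h : blockCube d δ k =
      ⋂ i, (fun x : Rd d => x i) ⁻¹' Set.Ico (δ * k i) (δ * (k i + 1)) := by
    ext x; simp [blockCube, Set.mem_iInter]
  rw [h]
  exact MeasurableSet.iInter fun i =>
    ((by fun_prop : Measurable fun x : Rd d => x i) measurableSet_Ico)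

lemma mem_blockCube_iff {δ : ℝ} (hδ : 0 < δ) (x : Rd d) (k : Fin d → ℤ) :
    x ∈ blockCube d δ k ↔ ∀ i, ⌊x i / δ⌋ = k i := by
  simp only [blockCube, Set.mem_setOf_eq]
  refine forall_congr' fun i => ?_
  rw [Set.mem_Ico, Int.floor_eq_iff, le_div_iff₀ hδ, div_lt_iff₀ hδ]
  constructor <;> (intro h; obtain ⟨h1, h2⟩ := h; constructor <;> nlinarith)

lemma dist_le_of_mem_blockCube {δ : ℝ} (hδ : 0 < δ) {k : Fin d → ℤ} {x y : Rd d}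
    (hx : x ∈ blockCube d δ k) (hy : y ∈ blockCube d δ k) :
    dist x y ^ 2 ≤ d * δ ^ 2 := by
  rw [EuclideanSpace.dist_eq, Real.sq_sqrt (by positivity)]
  calc ∑ i, dist (x i) (y i) ^ 2 ≤ ∑ _i : Fin d, δ ^ 2 := by
        refine Finset.sum_le_sum fun i _ => ?_
        have hxi := hx i; have hyi := hy i
        rw [Set.mem_Ico] at hxi hyi
        have : |x i - y i| ≤ δ := by
          rw [abs_sub_le_iff]; constructor <;> nlinarith [hxi.1, hxi.2, hyi.1, hyi.2]
        calc dist (x i) (y i) ^ 2 = |x i - y i| ^ 2 := by rw [Real.dist_eq]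
          _ ≤ δ ^ 2 := by nlinarith [abs_nonneg (x i - y i)]
    _ = d * δ ^ 2 := by simp [Finset.sum_const, nsmul_eq_mul]

end AuxBlock

/-- (∞-Wasserstein bound for the block approximation) There is a coupling η ∈ Π(γ, γ^δ) such
    that the η-essential supremum of the Euclidean distance |z − w| in ℝ^d × ℝ^d ≅ ℝ^{2d}
    between paired points is at most √(2d)·δ; in particular W_∞(γ, γ^δ) ≤ √(2d)·δ. -/
theorem blockApprox_Winfty_bound {d : ℕ}
    (μ ν : Measure (Rd d)) [IsProbabilityMeasure μ] [IsProbabilityMeasure ν]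
    (hμ : IsCompact (msupport μ)) (hν : IsCompact (msupport ν))
    (γ : Measure (Rd d × Rd d)) (hγP : IsProbabilityMeasure γ) (hγC : IsCoupling γ μ ν)
    (δ : ℝ) (hδ : δ ∈ Set.Ioo (0 : ℝ) 1) :
    ∃ η : Measure ((Rd d × Rd d) × (Rd d × Rd d)),
      IsProbabilityMeasure η ∧ IsCoupling η γ (blockApprox μ ν γ δ) ∧
      essSup (fun w => ENNReal.ofReal (Real.sqrt (dist w.1.1 w.2.1 ^ 2 + dist w.1.2 w.2.2 ^ 2)))
          η ≤ ENNReal.ofReal (Real.sqrt (2 * d) * δ) := by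
  obtain ⟨hδ0, hδ1⟩ := hδ
  set Q : (Fin d → ℤ) → Set (Rd d) := blockCube d δ with hQ
  set S : (Fin d → ℤ) × (Fin d → ℤ) → Set (Rd d × Rd d) := fun kl => Q kl.1 ×ˢ Q kl.2 with hS
  have hQm : ∀ k, MeasurableSet (Q k) := fun k => blockCube_measurableSet δ k
  have hSm : ∀ kl, MeasurableSet (S kl) := fun kl => (hQm kl.1).prod (hQm kl.2)
  have hSdisj : Pairwise (Function.onFun Disjoint S) := by
    intro kl kl' hne
    refine Set.disjoint_left.mpr fun x hx hx' => hne ?_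
    obtain ⟨h1, h2⟩ := hx
    obtain ⟨h1', h2'⟩ := hx'
    refine Prod.ext (funext fun i => ?_) (funext fun i => ?_)
    · rw [← (mem_blockCube_iff hδ0 x.1 _).1 h1 i, (mem_blockCube_iff hδ0 x.1 _).1 h1' i]
    · rw [← (mem_blockCube_iff hδ0 x.2 _).1 h2 i, (mem_blockCube_iff hδ0 x.2 _).1 h2' i]
  have hSunion : ⋃ kl, S kl = Set.univ := by
    ext x
    simp only [Set.mem_iUnion, Set.mem_univ, iff_true]
    refine ⟨(fun i => ⌊x.1 i / δ⌋, fun i => ⌊x.2 i / δ⌋), ?_, ?_⟩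
    · exact (mem_blockCube_iff hδ0 x.1 _).2 fun i => rfl
    · exact (mem_blockCube_iff hδ0 x.2 _).2 fun i => rfl
  -- γ decomposes as sum of restrictions
  have hγsum : γ = Measure.sum (fun kl => γ.restrict (S kl)) := by
    conv_lhs => rw [← Measure.restrict_univ (μ := γ), ← hSunion]
    exact Measure.restrict_iUnion hSdisj hSm
  -- the product block measures
  set P : (Fin d → ℤ) × (Fin d → ℤ) → Measure (Rd d × Rd d) := fun kl =>
    (normRestrict μ (Q kl.1)).prod (normRestrict ν (Q kl.2)) with hP
  haveI hPsf : ∀ kl, SFinite (P kl) := fun kl => Measure.prod.instSFinite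
  -- marginal bounds: γ (S kl) ≤ μ (Q kl.1), ν (Q kl.2)
  have hm1 : ∀ kl, γ (S kl) ≤ μ (Q kl.1) := by
    intro kl
    have : S kl ⊆ Prod.fst ⁻¹' Q kl.1 := fun x hx => hx.1
    calc γ (S kl) ≤ γ (Prod.fst ⁻¹' Q kl.1) := measure_mono this
      _ = μ (Q kl.1) := by rw [← hγC.1, Measure.map_apply measurable_fst (hQm _)]
  have hm2 : ∀ kl, γ (S kl) ≤ ν (Q kl.2) := by
    intro kl
    have : S kl ⊆ Prod.snd ⁻¹' Q kl.2 := fun x hx => hx.2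
    calc γ (S kl) ≤ γ (Prod.snd ⁻¹' Q kl.2) := measure_mono this
      _ = ν (Q kl.2) := by rw [← hγC.2, Measure.map_apply measurable_snd (hQm _)]
  -- normRestrict is a probability measure when the set has positive measure
  have hnorm_univ : ∀ (ρ : Measure (Rd d)) (_ : IsProbabilityMeasure ρ) (T : Set (Rd d)),
      ρ T ≠ 0 → normRestrict ρ T Set.univ = 1 := by
    intro ρ hρ T hT
    rw [normRestrict]
    simp only [Measure.smul_apply, Measure.restrict_apply_univ, smul_eq_mul]
    exact ENNReal.inv_mul_cancel hT (ne_top_of_le_ne_top one_ne_top prob_le_one)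
  have hnorm_zero : ∀ (ρ : Measure (Rd d)) (T : Set (Rd d)),
      ρ T = 0 → normRestrict ρ T = 0 := by
    intro ρ T hT
    rw [normRestrict, Measure.restrict_eq_zero.mpr hT, smul_zero]
  -- P kl has mass 1 when γ (S kl) ≠ 0
  have hPuniv : ∀ kl, γ (S kl) ≠ 0 → P kl Set.univ = 1 := by
    intro kl h
    have h1 : μ (Q kl.1) ≠ 0 := fun h0 => h (le_antisymm (h0 ▸ hm1 kl) zero_le)
    have h2 : ν (Q kl.2) ≠ 0 := fun h0 => h (le_antisymm (h0 ▸ hm2 kl) zero_le)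
    rw [hP, ← Set.univ_prod_univ, Measure.prod_prod,
      hnorm_univ μ inferInstance _ h1, hnorm_univ ν inferInstance _ h2, one_mul]
  -- the coupling
  set η : Measure ((Rd d × Rd d) × (Rd d × Rd d)) :=
    Measure.sum (fun kl => (γ.restrict (S kl)).prod (P kl)) with hη
  -- first marginal
  have hfst : η.map Prod.fst = γ := by
    rw [hη, Measure.map_sum measurable_fst.aemeasurable]
    conv_rhs => rw [hγsum]
    congr 1
    funext kl
    rw [Measure.map_fst_prod]
    rcases eq_or_ne (γ (S kl)) 0 with h | h
    · rw [Measure.restrict_eq_zero.mpr h, smul_zero]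
    · rw [hPuniv kl h, one_smul]
  -- second marginal
  have hsnd : η.map Prod.snd = blockApprox μ ν γ δ := by
    rw [hη, Measure.map_sum measurable_snd.aemeasurable, blockApprox]
    congr 1
    funext kl
    rw [Measure.map_snd_prod, Measure.restrict_apply_univ]
  have hηP : IsProbabilityMeasure η := by
    constructor
    have h1 : η Set.univ = η.map Prod.fst Set.univ := by
      rw [Measure.map_apply measurable_fst MeasurableSet.univ, Set.preimage_univ]
    rw [h1, hfst, measure_univ]
  refine ⟨η, hηP, ⟨hfst, hsnd⟩, ?_⟩
  -- essential supremum bound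
  refine essSup_le_of_ae_le _ ?_
  set G : Set ((Rd d × Rd d) × (Rd d × Rd d)) := ⋃ kl, S kl ×ˢ S kl with hG
  have hηGc : η Gᶜ = 0 := by
    rw [hη, Measure.sum_apply_of_countable]
    refine ENNReal.tsum_eq_zero.mpr fun kl => ?_
    have hsub : Gᶜ ⊆ (S kl ×ˢ S kl)ᶜ := Set.compl_subset_compl.mpr (Set.subset_iUnion (fun kl => S kl ×ˢ S kl) kl)
    refine le_antisymm ?_ zero_le
    calc (γ.restrict (S kl)).prod (P kl) Gᶜ
        ≤ (γ.restrict (S kl)).prod (P kl) ((S kl)ᶜ ×ˢ Set.univ ∪ Set.univ ×ˢ (S kl)ᶜ) := by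
          refine measure_mono (hsub.trans ?_)
          rw [Set.compl_prod_eq_union]
      _ ≤ (γ.restrict (S kl)).prod (P kl) ((S kl)ᶜ ×ˢ Set.univ)
          + (γ.restrict (S kl)).prod (P kl) (Set.univ ×ˢ (S kl)ᶜ) := measure_union_le _ _
      _ = 0 := by
          rw [Measure.prod_prod, Measure.prod_prod]
          have e1 : γ.restrict (S kl) (S kl)ᶜ = 0 := by
            rw [Measure.restrict_apply (hSm kl).compl]
            simp
          have e2 : P kl (S kl)ᶜ = 0 := by
            have hsub2 : (S kl)ᶜ ⊆ (Q kl.1)ᶜ ×ˢ Set.univ ∪ Set.univ ×ˢ (Q kl.2)ᶜ := by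
              rw [hS, Set.compl_prod_eq_union]
            refine le_antisymm ?_ zero_le
            calc P kl (S kl)ᶜ ≤ P kl ((Q kl.1)ᶜ ×ˢ Set.univ) + P kl (Set.univ ×ˢ (Q kl.2)ᶜ) :=
                  (measure_mono hsub2).trans (measure_union_le _ _)
              _ = 0 := by
                  rw [hP, Measure.prod_prod, Measure.prod_prod]
                  have f1 : normRestrict μ (Q kl.1) (Q kl.1)ᶜ = 0 := by
                    rw [normRestrict, Measure.smul_apply,
                      Measure.restrict_apply (hQm kl.1).compl]
                    simp
                  have f2 : normRestrict ν (Q kl.2) (Q kl.2)ᶜ = 0 := by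
                    rw [normRestrict, Measure.smul_apply,
                      Measure.restrict_apply (hQm kl.2).compl]
                    simp
                  rw [f1, f2, zero_mul, mul_zero, add_zero]
          rw [e1, e2, zero_mul, mul_zero, add_zero]
  have hae : ∀ᵐ w ∂η, w ∈ G := by
    rw [Filter.eventually_iff, mem_ae_iff]
    simpa using hηGc
  filter_upwards [hae] with w hw
  obtain ⟨_, ⟨kl, rfl⟩, hw1, hw2⟩ := hw
  apply ENNReal.ofReal_le_ofReal
  have b1 : dist w.1.1 w.2.1 ^ 2 ≤ d * δ ^ 2 :=
    dist_le_of_mem_blockCube hδ0 hw1.1 hw2.1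
  have b2 : dist w.1.2 w.2.2 ^ 2 ≤ d * δ ^ 2 :=
    dist_le_of_mem_blockCube hδ0 hw1.2 hw2.2
  calc Real.sqrt (dist w.1.1 w.2.1 ^ 2 + dist w.1.2 w.2.2 ^ 2)
      ≤ Real.sqrt (2 * d * δ ^ 2) := Real.sqrt_le_sqrt (by nlinarith)
    _ = Real.sqrt (2 * d) * δ := by
        rw [Real.sqrt_mul (by positivity), Real.sqrt_sq hδ0.le]
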